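/- (Chevalley criterion, Cat version, 'if' direction) Let f : A ⥤ B be a functor and let f₁ : (A ↓ A) ⥤ (B ↓ f) be the functor sending a morphism α : a₀ ⟶ a₁ of A to the object (f a₀, a₁, f α) of the comma category B ↓ f. If f₁ admits a right adjoint with counit an identity (i.e. f₁ has a strict right adjoint section), then f is a Grothendieck fibration. -/

import Mathlib

open CategoryTheory

universe v₁ v₂ u₁ u₂

variable {A : Type u₁} {B : Type u₂} [Category.{v₁} A] [Category.{v₂} B]

/-- `α : a' ⟶ a` is `f`-cartesian. -/
def IsCartesian (f : A ⥤ B) {a' a : A} (α : a' ⟶ a) : Prop :=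
  ∀ {y : A} (τ' : y ⟶ a) (g : f.obj y ⟶ f.obj a'),
    f.map τ' = g ≫ f.map α →
      ∃! τ : y ⟶ a', f.map τ = g ∧ τ ≫ α = τ'

/-- `f` is a Grothendieck fibration. -/
def IsGrothendieckFibration (f : A ⥤ B) : Prop :=
  ∀ (a : A) (b : B) (β : b ⟶ f.obj a),
    ∃ (a' : A) (α : a' ⟶ a) (h : f.obj a' = b),
      f.map α = eqToHom h ≫ β ∧ IsCartesian f α

/-- The canonical functor `f₁ : (A ↓ A) ⥤ (B ↓ f)` sending `α : a₀ ⟶ a₁` to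
`(f a₀, a₁, f α)`. -/
def fOne (f : A ⥤ B) : Arrow A ⥤ Comma (𝟭 B) f where
  obj α := { left := f.obj α.left, right := α.right, hom := f.map α.hom }
  map {X Y} u :=
    { left := f.map u.left
      right := u.right
      w := by
        dsimp
        rw [← f.map_comp, ← f.map_comp, Arrow.w] }

lemma comma_hom_of_eq {C : Type*} {D : Type*} {E : Type*} [Category C] [Category D] [Category E]
    {L : C ⥤ E} {R : D ⥤ E} {Y Z : Comma L R} (e : Y = Z) :
    Y.hom = eqToHom (by rw [e]) ≫ Z.hom ≫ eqToHom (by rw [e]) := by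
  subst e; simp

/-- (Chevalley criterion, `if` direction) If `f₁ : (A ↓ A) ⥤ (B ↓ f)` admits a right adjoint
with identity counit, then `f` is a Grothendieck fibration. -/
theorem stmt7 (f : A ⥤ B)
    (h : ∃ (r : Comma (𝟭 B) f ⥤ Arrow A) (adj : fOne f ⊣ r)
      (w : r ⋙ fOne f = 𝟭 (Comma (𝟭 B) f)), adj.counit = eqToHom w) :
    IsGrothendieckFibration f := by
  obtain ⟨r, adj, w, hc⟩ := h
  intro a b β
  set X : Comma (𝟭 B) f := { left := b, right := a, hom := β } with hX
  have hobj : (fOne f).obj (r.obj X) = X := Functor.congr_obj w X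
  have hright : (r.obj X).right = a := congrArg Comma.right hobj
  have hleft : f.obj (r.obj X).left = b := congrArg Comma.left hobj
  have hhom : f.map (r.obj X).hom =
      eqToHom hleft ≫ β ≫ eqToHom (congrArg f.obj hright).symm := by
    have := comma_hom_of_eq hobj
    simpa [fOne] using this
  refine ⟨(r.obj X).left, (r.obj X).hom ≫ eqToHom hright, hleft, ?_, ?_⟩
  · rw [f.map_comp, hhom, eqToHom_map]
    simp
  · intro y τ' g hg
    have hfα : f.map ((r.obj X).hom ≫ eqToHom hright) = eqToHom hleft ≫ β := by
      rw [f.map_comp, hhom, eqToHom_map]; simp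
    rw [hfα] at hg
    -- build u : (fOne f).obj (Arrow.mk τ') ⟶ X
    have hw : (𝟭 B).map (g ≫ eqToHom hleft) ≫ X.hom =
        ((fOne f).obj (Arrow.mk τ')).hom ≫ f.map (𝟙 a) := by
      simp [fOne, hX, ← hg]
      exact hg.symm
    set u : (fOne f).obj (Arrow.mk τ') ⟶ X :=
      { left := g ≫ eqToHom hleft, right := 𝟙 a, w := hw } with hu
    set v : Arrow.mk τ' ⟶ r.obj X := (adj.homEquiv _ _) u with hv
    have hsymm : (fOne f).map v ≫ adj.counit.app X = u := by
      have := (adj.homEquiv (Arrow.mk τ') X).symm_apply_apply u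
      rw [Adjunction.homEquiv_counit] at this
      rw [← hv] at this
      exact this
    rw [hc, eqToHom_app] at hsymm
    have hL : f.map v.left ≫ eqToHom hleft = g ≫ eqToHom hleft := by
      have := congrArg CommaMorphism.left hsymm
      simp only [Comma.comp_left] at this
      erw [Comma.eqToHom_left] at this
      simpa [fOne, hu] using this
    have hR : v.right ≫ eqToHom hright = 𝟙 a := by
      have := congrArg CommaMorphism.right hsymm
      simp only [Comma.comp_right] at this
      erw [Comma.eqToHom_right] at this
      simpa [fOne, hu] using this
    have hfv : f.map v.left = g := by
      have := hL
      rwa [← cancel_mono (eqToHom hleft)]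
    have hvr : v.right = eqToHom hright.symm := by
      rw [← cancel_mono (eqToHom hright), hR]; simp
    refine ⟨v.left, ⟨hfv, ?_⟩, ?_⟩
    · have := Arrow.w v
      simp only [Arrow.mk_hom] at this
      rw [← Category.assoc, this, hvr]
      simp
    · rintro τ ⟨hτ1, hτ2⟩
      -- build v' and use injectivity
      have hw' : τ ≫ (Arrow.mk (r.obj X).hom).hom = (Arrow.mk τ').hom ≫ eqToHom hright.symm := by
        simp only [Arrow.mk_hom]
        rw [← hτ2]
        simp
      have hveq : (⟨τ, eqToHom hright.symm, by simpa using hw'⟩ : Arrow.mk τ' ⟶ r.obj X) = v := by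
        apply (adj.homEquiv _ _).symm.injective
        rw [hv, Equiv.symm_apply_apply]
        erw [Adjunction.homEquiv_counit, hc, eqToHom_app]
        apply CommaMorphism.ext
        · simp only [Comma.comp_left]
          erw [Comma.eqToHom_left]
          simpa [fOne, hu] using congrArg (· ≫ eqToHom hleft) hτ1
        · simp only [Comma.comp_right]
          erw [Comma.eqToHom_right]
          exact (eqToHom_trans hright.symm _).trans (by simp [hu])
      rw [← hveq]
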